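/- For the multidimensional Kharlamova system (potential V = Σ_{i=1}^{n-1} B_i Γ_i with B_i ≠ 0), the functions F_{i,j}(Ω) = ((I_i+I_n)/B_i)Ω_{in} − ((I_j+I_n)/B_j)Ω_{jn} are first integrals for all i, j = 1,...,n-1. -/

import Mathlib

/-- For the multidimensional Kharlamova system
`(I_i+I_n) Ω̇_{in} = B_i Γ_n`, `Γ̇_i = −Γ_n Ω_{in}`, `Γ̇_n = Σ Γ_i Ω_{in}`,
the functions `F_{i,j} = ((I_i+I_n)/B_i) Ω_{in} − ((I_j+I_n)/B_j) Ω_{jn}`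
are first integrals for all `i, j`. -/
theorem kharlamova_first_integrals (n : ℕ)
    (I : Fin n → ℝ) (In : ℝ) (hI : ∀ i, 0 < I i) (hIn : 0 < In)
    (B : Fin n → ℝ) (hB : ∀ i, B i ≠ 0)
    (Ω : Fin n → ℝ → ℝ) (Γ : Fin n → ℝ → ℝ) (Γn : ℝ → ℝ)
    (hΩ : ∀ i t, HasDerivAt (Ω i) (B i * Γn t / (I i + In)) t)
    (hΓ : ∀ i t, HasDerivAt (Γ i) (-(Γn t * Ω i t)) t)
    (hΓn : ∀ t, HasDerivAt Γn (∑ i, Γ i t * Ω i t) t) :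
    ∀ i j t, ((I i + In) / B i) * Ω i t - ((I j + In) / B j) * Ω j t
           = ((I i + In) / B i) * Ω i 0 - ((I j + In) / B j) * Ω j 0 := by
  intro i j t
  have key : ∀ (k : Fin n) (t : ℝ),
      HasDerivAt (fun s => ((I k + In) / B k) * Ω k s) (Γn t) t := by
    intro k t
    have h := ((hΩ k t).const_mul ((I k + In) / B k))
    have hIne : I k + In ≠ 0 := by have := hI k; linarith
    refine h.congr_deriv ?_
    field_simp [hB k]
  have hf : ∀ s : ℝ, HasDerivAt
      (fun s => ((I i + In) / B i) * Ω i s - ((I j + In) / B j) * Ω j s) 0 s := by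
    intro s
    have := (key i s).sub (key j s)
    exact (sub_self (Γn s)) ▸ this
  have := fun s : ℝ => (hf s).deriv
  have hconst := is_const_of_deriv_eq_zero
    (f := fun s => ((I i + In) / B i) * Ω i s - ((I j + In) / B j) * Ω j s)
    (fun s => (hf s).differentiableAt) (fun s => (hf s).deriv) t 0
  simpa using hconst
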